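/- Let B be a reflexive real Banach space and let L, K be continuous linear functionals on B. Suppose the infimum of L over the set C := {v ∈ B | K(v) = 0, ‖v‖ = 1} is negative (in particular C is nonempty). Then this infimum is attained: there exists w ∈ C with L(w) = inf_{v ∈ C} L(v). -/

import Mathlib

open NormedSpace

set_option maxHeartbeats 1000000
set_option synthInstance.maxHeartbeats 200000

/-- A closed subspace (here, the kernel of a functional) of a reflexive space is reflexive. -/
lemma ker_reflexive {B : Type*} [NormedAddCommGroup B] [NormedSpace ℝ B]
    (hrefl : Function.Surjective (inclusionInDoubleDual ℝ B)) (K : B →L[ℝ] ℝ) :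
    Function.Surjective (inclusionInDoubleDual ℝ (LinearMap.ker (K : B →ₗ[ℝ] ℝ))) := by
  intro F
  -- restriction map B* → (ker K)*
  let restr : (B →L[ℝ] ℝ) →L[ℝ] ((LinearMap.ker (K : B →ₗ[ℝ] ℝ)) →L[ℝ] ℝ) :=
    (ContinuousLinearMap.compL ℝ (LinearMap.ker (K : B →ₗ[ℝ] ℝ)) B ℝ).flip (LinearMap.ker (K : B →ₗ[ℝ] ℝ)).subtypeL
  obtain ⟨x, hx⟩ := hrefl (F.comp restr)
  have hxf : ∀ f : B →L[ℝ] ℝ, f x = F (f.comp (LinearMap.ker (K : B →ₗ[ℝ] ℝ)).subtypeL) := by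
    intro f
    have := congrArg (fun G => G f) hx
    simpa [dual_def, restr] using this
  have hxN : x ∈ LinearMap.ker (K : B →ₗ[ℝ] ℝ) := by
    have h0 : (K.comp (LinearMap.ker (K : B →ₗ[ℝ] ℝ)).subtypeL) = 0 := by
      ext v
      simpa using v.2
    have := hxf K
    rw [h0] at this
    simpa [LinearMap.mem_ker] using this
  refine ⟨⟨x, hxN⟩, ?_⟩
  ext g
  obtain ⟨g', hg', _⟩ := exists_extension_norm_eq (LinearMap.ker (K : B →ₗ[ℝ] ℝ)) g
  have h1 : g'.comp (LinearMap.ker (K : B →ₗ[ℝ] ℝ)).subtypeL = g := by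
    ext v
    simpa using hg' v
  have hfx := hxf g'
  rw [h1] at hfx
  have h2 : g ⟨x, hxN⟩ = g' x := (hg' ⟨x, hxN⟩).symm
  simp [dual_def, h2, hfx]

/-- In a reflexive Banach space, if the infimum of a continuous
linear functional `L` over `C = {v | K v = 0 ∧ ‖v‖ = 1}` is negative, then it
is attained. -/
theorem stmt_2 {B : Type*} [NormedAddCommGroup B] [NormedSpace ℝ B] [CompleteSpace B]
    (hrefl : Function.Surjective (NormedSpace.inclusionInDoubleDual ℝ B))
    (L K : B →L[ℝ] ℝ)
    (hne : {v : B | K v = 0 ∧ ‖v‖ = 1}.Nonempty)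
    (hinf : sInf (L '' {v : B | K v = 0 ∧ ‖v‖ = 1}) < 0) :
    ∃ w ∈ {v : B | K v = 0 ∧ ‖v‖ = 1},
      L w = sInf (L '' {v : B | K v = 0 ∧ ‖v‖ = 1}) := by
  set C : Set B := {v : B | K v = 0 ∧ ‖v‖ = 1} with hC
  set S : Set ℝ := L '' C with hS
  set m : ℝ := sInf S with hm
  set L' : (LinearMap.ker (K : B →ₗ[ℝ] ℝ)) →L[ℝ] ℝ := L.comp (LinearMap.ker (K : B →ₗ[ℝ] ℝ)).subtypeL with hL'
  have hCsymm : ∀ v ∈ C, -v ∈ C := by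
    rintro v ⟨h1, h2⟩
    exact ⟨by simp [h1], by simp [h2]⟩
  have hbdd : BddBelow S := by
    refine ⟨-‖L‖, ?_⟩
    rintro y ⟨v, ⟨_, hv1⟩, rfl⟩
    have h := L.le_opNorm v
    rw [hv1, mul_one, Real.norm_eq_abs] at h
    linarith [(abs_le.mp h).1]
  have hm_le : ∀ v ∈ C, m ≤ L v := fun v hv => csInf_le hbdd ⟨v, hv, rfl⟩
  -- m = -‖L'‖
  have hmneg : m < 0 := hinf
  have h1 : ‖L'‖ ≤ -m := by
    refine L'.opNorm_le_bound (by linarith) ?_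
    intro u
    rcases eq_or_ne u 0 with rfl | hu
    · simp
    · have hun : ‖(u : B)‖ ≠ 0 := by
        simpa using (Submodule.coe_eq_zero.not.mpr hu)
      set v : B := ‖(u : B)‖⁻¹ • (u : B) with hv
      have hvC : v ∈ C := by
        constructor
        · have : K (u : B) = 0 := u.2
          simp [hv, this]
        · rw [hv, norm_smul]
          rw [norm_inv, norm_norm, inv_mul_cancel₀ hun]
      have hle1 : m ≤ L v := hm_le v hvC
      have hle2 : m ≤ -(L v) := by
        have := hm_le (-v) (hCsymm v hvC)
        simpa using this
      have habs : |L v| ≤ -m := abs_le.mpr ⟨by linarith, by linarith⟩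
      have hLu : L' u = ‖(u : B)‖ * L v := by
        simp only [hL', ContinuousLinearMap.comp_apply, Submodule.subtypeL_apply]
        rw [hv, map_smul]
        rw [smul_eq_mul, ← mul_assoc, mul_inv_cancel₀ hun, one_mul]
      have hnu : ‖u‖ = ‖(u : B)‖ := rfl
      rw [hLu, Real.norm_eq_abs, abs_mul, abs_of_nonneg (norm_nonneg _), hnu]
      calc ‖(u : B)‖ * |L v| ≤ ‖(u : B)‖ * (-m) :=
            mul_le_mul_of_nonneg_left habs (norm_nonneg _)
        _ = -m * ‖(u : B)‖ := mul_comm _ _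
  have h2 : -‖L'‖ ≤ m := by
    refine le_csInf (hne.image L) ?_
    rintro y ⟨v, hv, rfl⟩
    have hvN : v ∈ LinearMap.ker (K : B →ₗ[ℝ] ℝ) := hv.1
    have h := L'.le_opNorm ⟨v, hvN⟩
    have hn : ‖(⟨v, hvN⟩ : LinearMap.ker (K : B →ₗ[ℝ] ℝ))‖ = 1 := hv.2
    rw [hn, mul_one] at h
    have hval : L' ⟨v, hvN⟩ = L v := rfl
    rw [hval, Real.norm_eq_abs] at h
    linarith [(abs_le.mp h).1]
  have hmeq : m = -‖L'‖ := le_antisymm (by linarith) h2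
  have hL'pos : 0 < ‖L'‖ := by linarith
  have hL'ne : L' ≠ 0 := by
    obtain ⟨y, ⟨v, hv, rfl⟩, hy⟩ := exists_lt_of_csInf_lt (hne.image L) hinf
    intro h
    have : L' ⟨v, hv.1⟩ = L v := rfl
    rw [h] at this
    simp only [ContinuousLinearMap.zero_apply] at this
    rw [← this] at hy
    exact lt_irrefl _ hy
  obtain ⟨F, hF1, hF2⟩ := exists_dual_vector ℝ L' hL'pos.ne'
  obtain ⟨u, hu⟩ := ker_reflexive hrefl K F
  have hunorm : ‖u‖ = 1 := by
    have h := (inclusionInDoubleDualLi ℝ (E := LinearMap.ker (K : B →ₗ[ℝ] ℝ))).norm_map u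
    rw [show inclusionInDoubleDualLi ℝ u = inclusionInDoubleDual ℝ (LinearMap.ker (K : B →ₗ[ℝ] ℝ)) u from rfl,
      hu, hF1] at h
    exact h.symm
  have hLu : L' u = ‖L'‖ := by
    have h := dual_def ℝ (LinearMap.ker (K : B →ₗ[ℝ] ℝ)) u L'
    rw [hu] at h
    rw [← h]
    exact_mod_cast hF2
  refine ⟨-(u : B), ⟨?_, ?_⟩, ?_⟩
  · have : K (u : B) = 0 := u.2
    simp [this]
  · simpa using hunorm
  · have hval : L (u : B) = ‖L'‖ := hLu
    rw [map_neg, hval, hmeq]
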